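/- Let X(s,u) be the surface of osculating circles of a unit-speed curve α with curvature κ = 1/r and torsion τ. At regular points, the unit normal of the surface is 𝐍(s,u) = (r²τ² + r'²)^{-1/2} (-rτ sin u · T + rτ cos u · N + r' · B). -/

import Mathlib

open Real

noncomputable section

/-- Euclidean dot product on ℝ³. -/
def dot3 (a b : Fin 3 → ℝ) : ℝ := a 0 * b 0 + a 1 * b 1 + a 2 * b 2

/-- Cross product on ℝ³. -/
def cross3 (a b : Fin 3 → ℝ) : Fin 3 → ℝ :=
  ![a 1 * b 2 - a 2 * b 1, a 2 * b 0 - a 0 * b 2, a 0 * b 1 - a 1 * b 0]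

/-- Euclidean norm on ℝ³. -/
def norm3 (a : Fin 3 → ℝ) : ℝ := Real.sqrt (dot3 a a)

/-- Scalar triple product: determinant of the three vectors. -/
def det3 (a b c : Fin 3 → ℝ) : ℝ := dot3 a (cross3 b c)

/-- At regular points the unit normal of the surface of osculating
circles is `(r²τ² + r'²)^{-1/2} (-rτ sin u · T + rτ cos u · N + r' · B)`. -/
theorem stmt_5
    (α T N B : ℝ → Fin 3 → ℝ) (κ τ r r' : ℝ → ℝ)
    (hκ : ∀ s, 0 < κ s)
    (hr : ∀ s, r s = (κ s)⁻¹)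
    -- Frenet frame and Frenet equations
    (hTT : ∀ s, dot3 (T s) (T s) = 1)
    (hNN : ∀ s, dot3 (N s) (N s) = 1)
    (hTN : ∀ s, dot3 (T s) (N s) = 0)
    (hB : ∀ s, B s = cross3 (T s) (N s))
    (hα : ∀ s, HasDerivAt α (T s) s)
    (hT : ∀ s, HasDerivAt T (κ s • N s) s)
    (hN : ∀ s, HasDerivAt N ((-κ s) • T s + τ s • B s) s)
    (hB' : ∀ s, HasDerivAt B ((-τ s) • N s) s)
    (hr' : ∀ s, HasDerivAt r (r' s) s)
    -- the surface of osculating circles and its partial derivatives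
    (X Xs Xu : ℝ → ℝ → Fin 3 → ℝ)
    (hX : ∀ s u, X s u = α s + r s • (Real.sin u • T s + (1 - Real.cos u) • N s))
    (hXs : ∀ s u, HasDerivAt (fun t => X t u) (Xs s u) s)
    (hXu : ∀ s u, HasDerivAt (fun w => X s w) (Xu s u) u)
    :
    ∀ s u, Real.cos u ≠ 1 → ¬(r' s = 0 ∧ τ s = 0) →
      (norm3 (cross3 (Xs s u) (Xu s u)))⁻¹ • cross3 (Xs s u) (Xu s u) =
        (Real.sqrt ((r s) ^ 2 * (τ s) ^ 2 + (r' s) ^ 2))⁻¹ •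
          ((-(r s * τ s * Real.sin u)) • T s + (r s * τ s * Real.cos u) • N s
            + r' s • B s) := by
  intro s u hcu _
  have hκ0 : κ s ≠ 0 := (hκ s).ne'
  have hrpos : 0 < r s := by rw [hr]; exact inv_pos.mpr (hκ s)
  have hκr : r s * κ s = 1 := by rw [hr]; field_simp
  have hTT' := hTT s; have hNN' := hNN s; have hTN' := hTN s
  simp only [dot3] at hTT' hNN' hTN'
  have hpy : Real.sin u ^ 2 + Real.cos u ^ 2 = 1 := Real.sin_sq_add_cos_sq u
  -- value of Xs
  have hDs : HasDerivAt (fun t => α t + r t • (Real.sin u • T t + (1 - Real.cos u) • N t))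
      (T s + (r s • (Real.sin u • (κ s • N s) + (1 - Real.cos u) • ((-κ s) • T s + τ s • B s))
        + r' s • (Real.sin u • T s + (1 - Real.cos u) • N s))) s :=
    (hα s).add ((hr' s).smul (((hT s).const_smul (Real.sin u)).add
      ((hN s).const_smul (1 - Real.cos u))))
  have hXfun : (fun t => X t u)
      = fun t => α t + r t • (Real.sin u • T t + (1 - Real.cos u) • N t) :=
    funext fun t => hX t u
  have hXs1 := (hXfun ▸ hXs s u).unique hDs
  have hXsv : Xs s u = (Real.cos u + r' s * Real.sin u) • T s
      + (Real.sin u + r' s * (1 - Real.cos u)) • N s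
      + (r s * τ s * (1 - Real.cos u)) • B s := by
    funext i
    rw [hXs1]
    simp only [Pi.add_apply, Pi.smul_apply, smul_eq_mul]
    linear_combination (Real.sin u * N s i - (1 - Real.cos u) * T s i) * hκr
  -- value of Xu
  have hDu : HasDerivAt (fun w => α s + r s • (Real.sin w • T s + (1 - Real.cos w) • N s))
      (r s • (Real.cos u • T s + Real.sin u • N s)) u := by
    have hc : HasDerivAt (fun w => 1 - Real.cos w) (Real.sin u) u := by
      simpa using (Real.hasDerivAt_cos u).const_sub 1
    have h1 : HasDerivAt (fun w => Real.sin w • T s + (1 - Real.cos w) • N s)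
        (Real.cos u • T s + Real.sin u • N s) u :=
      ((Real.hasDerivAt_sin u).smul_const (T s)).add (hc.smul_const (N s))
    have h2 := (hasDerivAt_const u (α s)).add (h1.const_smul (r s))
    rw [zero_add] at h2
    exact h2
  have hXufun : (fun w => X s w)
      = fun w => α s + r s • (Real.sin w • T s + (1 - Real.cos w) • N s) :=
    funext fun w => hX s w
  have hXuv : Xu s u = r s • (Real.cos u • T s + Real.sin u • N s) :=
    (hXufun ▸ hXu s u).unique hDu
  -- cross product
  set V := (-(r s * τ s * Real.sin u)) • T s + (r s * τ s * Real.cos u) • N s + r' s • B s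
    with hV
  have hcross : cross3 (Xs s u) (Xu s u) = (r s * (1 - Real.cos u)) • V := by
    funext i
    rw [hXsv, hXuv, hV, hB]
    fin_cases i
    · simp [cross3, Matrix.vecHead, Matrix.vecTail]
      linear_combination (r s * τ s * (1 - Real.cos u) * r s * Real.cos u * N s 0) * hTT'
        + (r s * τ s * (1 - Real.cos u) * r s * Real.sin u * N s 0
            - r s * τ s * (1 - Real.cos u) * r s * Real.cos u * T s 0) * hTN'
        + (-(r s * τ s * (1 - Real.cos u) * r s * Real.sin u * T s 0)) * hNN'
        + (r s * r' s * (T s 1 * N s 2 - T s 2 * N s 1)) * hpy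
    · simp [cross3, Matrix.vecHead, Matrix.vecTail]
      linear_combination (r s * τ s * (1 - Real.cos u) * r s * Real.cos u * N s 1) * hTT'
        + (r s * τ s * (1 - Real.cos u) * r s * Real.sin u * N s 1
            - r s * τ s * (1 - Real.cos u) * r s * Real.cos u * T s 1) * hTN'
        + (-(r s * τ s * (1 - Real.cos u) * r s * Real.sin u * T s 1)) * hNN'
        + (r s * r' s * (T s 2 * N s 0 - T s 0 * N s 2)) * hpy
    · simp [cross3, Matrix.vecHead, Matrix.vecTail]
      linear_combination (r s * τ s * (1 - Real.cos u) * r s * Real.cos u * N s 2) * hTT'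
        + (r s * τ s * (1 - Real.cos u) * r s * Real.sin u * N s 2
            - r s * τ s * (1 - Real.cos u) * r s * Real.cos u * T s 2) * hTN'
        + (-(r s * τ s * (1 - Real.cos u) * r s * Real.sin u * T s 2)) * hNN'
        + (r s * r' s * (T s 0 * N s 1 - T s 1 * N s 0)) * hpy
  -- orthonormality involving B
  have hTB : dot3 (T s) (B s) = 0 := by
    rw [hB]
    simp only [dot3, cross3, Matrix.cons_val_zero, Matrix.cons_val_one, Matrix.head_cons,
      Matrix.cons_val_two, Matrix.tail_cons]
    ring
  have hNB : dot3 (N s) (B s) = 0 := by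
    rw [hB]
    simp only [dot3, cross3, Matrix.cons_val_zero, Matrix.cons_val_one, Matrix.head_cons,
      Matrix.cons_val_two, Matrix.tail_cons]
    ring
  have hBB : dot3 (B s) (B s) = 1 := by
    rw [hB]
    simp only [dot3, cross3, Matrix.cons_val_zero, Matrix.cons_val_one, Matrix.head_cons,
      Matrix.cons_val_two, Matrix.tail_cons]
    linear_combination (N s 0 * N s 0 + N s 1 * N s 1 + N s 2 * N s 2) * hTT' + hNN'
      + (-(T s 0 * N s 0 + T s 1 * N s 1 + T s 2 * N s 2)) * hTN'
  have hTBc := hTB; have hNBc := hNB; have hBBc := hBB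
  simp only [dot3] at hTBc hNBc hBBc
  -- squared length of V
  have hdotVV : dot3 V V = (r s) ^ 2 * (τ s) ^ 2 + (r' s) ^ 2 := by
    simp only [hV, dot3, Pi.add_apply, Pi.smul_apply, smul_eq_mul]
    linear_combination (r s * τ s * Real.sin u) ^ 2 * hTT'
      + (r s * τ s * Real.cos u) ^ 2 * hNN' + (r' s) ^ 2 * hBBc
      + (-2 * (r s * τ s) ^ 2 * Real.sin u * Real.cos u) * hTN'
      + (2 * (-(r s * τ s * Real.sin u)) * (r' s)) * hTBc
      + (2 * (r s * τ s * Real.cos u) * (r' s)) * hNBc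
      + ((r s) ^ 2 * (τ s) ^ 2) * hpy
  -- the norm
  have hcos1 : Real.cos u < 1 := lt_of_le_of_ne (Real.cos_le_one u) hcu
  have hk : 0 < r s * (1 - Real.cos u) := by
    have : 0 < 1 - Real.cos u := by linarith
    positivity
  have hsq : dot3 ((r s * (1 - Real.cos u)) • V) ((r s * (1 - Real.cos u)) • V)
      = (r s * (1 - Real.cos u)) ^ 2 * dot3 V V := by
    simp only [dot3, Pi.smul_apply, smul_eq_mul]; ring
  have hnorm : norm3 (cross3 (Xs s u) (Xu s u))
      = (r s * (1 - Real.cos u)) * Real.sqrt ((r s) ^ 2 * (τ s) ^ 2 + (r' s) ^ 2) := by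
    rw [hcross]
    unfold norm3
    rw [hsq, hdotVV, Real.sqrt_mul (sq_nonneg _), Real.sqrt_sq hk.le]
  rw [hnorm, hcross, mul_inv, smul_smul]
  congr 1
  rw [mul_comm ((r s * (1 - Real.cos u))⁻¹) _, mul_assoc, inv_mul_cancel₀ hk.ne', mul_one]
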